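/- Let Θ_i, Θ_j, Θ_k ∈ [0, π) satisfy either (a) Θ_i + Θ_j + Θ_k ≤ π, or (b) Θ_i + Θ_j < π + Θ_k, Θ_j + Θ_k < π + Θ_i, Θ_k + Θ_i < π + Θ_j. For any positive reals r_i, r_j, r_k, define l_i > 0 by cosh l_i = cosh r_j cosh r_k + cos Θ_i sinh r_j sinh r_k, and define l_j, l_k cyclically. Then l_i, l_j, l_k satisfy the strict triangle inequalities: l_i < l_j + l_k, l_j < l_k + l_i, l_k < l_i + l_j. -/
import Mathlib


open Real

private lemma tci_id1 (a b c A B C ci cj ck : ℝ)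
    (hA : A ^ 2 = a ^ 2 + 1) (hB : B ^ 2 = b ^ 2 + 1) (hC : C ^ 2 = c ^ 2 + 1) :
    1 + 2 * ((B * C + ci * b * c) * (C * A + cj * c * a) * (A * B + ck * a * b))
      - (B * C + ci * b * c) ^ 2 - (C * A + cj * c * a) ^ 2 - (A * B + ck * a * b) ^ 2
    = (1 - ci ^ 2) * (b ^ 2 * c ^ 2) + (1 - cj ^ 2) * (a ^ 2 * c ^ 2)
      + (1 - ck ^ 2) * (a ^ 2 * b ^ 2) + 2 * (1 + ci * cj * ck) * (a ^ 2 * b ^ 2 * c ^ 2)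
      + 2 * (ci + cj * ck) * (a ^ 2 * b * c * (B * C))
      + 2 * (cj + ci * ck) * (a * b ^ 2 * c * (A * C))
      + 2 * (ck + ci * cj) * (a * b * c ^ 2 * (A * B)) := by
  linear_combination (-C ^ 2 - B ^ 2 + 2 * B ^ 2 * C ^ 2 + 2 * b * c * B * C * ci) * hA
    + (-1 + C ^ 2 + 2 * a * c * A * C * cj - a ^ 2 + 2 * a ^ 2 * C ^ 2) * hB
    + (b ^ 2 + 2 * a * b * A * B * ck + a ^ 2 + 2 * a ^ 2 * b ^ 2) * hC

private lemma tci_id2 (a b c A B C ci cj ck : ℝ)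
    (hA : A ^ 2 = a ^ 2 + 1) (hB : B ^ 2 = b ^ 2 + 1) (hC : C ^ 2 = c ^ 2 + 1) :
    (1 - cj ^ 2) *
      (1 + 2 * ((B * C + ci * b * c) * (C * A + cj * c * a) * (A * B + ck * a * b))
        - (B * C + ci * b * c) ^ 2 - (C * A + cj * c * a) ^ 2 - (A * B + ck * a * b) ^ 2)
    = ((1 - cj ^ 2) * (c * a * B) + (ci + cj * ck) * (a * b * C) + (ck + ci * cj) * (b * c * A)) ^ 2
      + (1 - ci ^ 2 - cj ^ 2 - ck ^ 2 - 2 * (ci * cj * ck)) * (a * b * C + cj * (b * c * A)) ^ 2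
      + (1 - cj ^ 2) * (1 - ci ^ 2 - cj ^ 2 - ck ^ 2 - 2 * (ci * cj * ck)) * (b * c) ^ 2 := by
  linear_combination
    (-C ^ 2 + C ^ 2 * cj ^ 2 - B ^ 2 + B ^ 2 * cj ^ 2 + 2 * B ^ 2 * C ^ 2
      - 2 * B ^ 2 * C ^ 2 * cj ^ 2 + 2 * b * c * B * C * ci - 2 * b * c * B * C * ci * cj ^ 2
      - b ^ 2 * c ^ 2 * ck ^ 2 - b ^ 2 * c ^ 2 * cj ^ 2 + b ^ 2 * c ^ 2 * cj ^ 2 * ck ^ 2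
      + b ^ 2 * c ^ 2 * cj ^ 4 - 2 * b ^ 2 * c ^ 2 * ci * cj * ck
      + 2 * b ^ 2 * c ^ 2 * ci * cj ^ 3 * ck) * hA
    + (-1 + cj ^ 2 + C ^ 2 - C ^ 2 * cj ^ 2 + 2 * a * c * A * C * cj
      - 2 * a * c * A * C * cj ^ 3 - a ^ 2 + a ^ 2 * cj ^ 2 + 2 * a ^ 2 * C ^ 2
      - 2 * a ^ 2 * C ^ 2 * cj ^ 2 - a ^ 2 * c ^ 2 + 2 * a ^ 2 * c ^ 2 * cj ^ 2
      - a ^ 2 * c ^ 2 * cj ^ 4) * hB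
    + (b ^ 2 - b ^ 2 * cj ^ 2 + 2 * a * b * A * B * ck - 2 * a * b * A * B * cj ^ 2 * ck
      + a ^ 2 - a ^ 2 * cj ^ 2 + a ^ 2 * b ^ 2 + a ^ 2 * b ^ 2 * ck ^ 2
      - a ^ 2 * b ^ 2 * cj ^ 2 - a ^ 2 * b ^ 2 * cj ^ 2 * ck ^ 2) * hC

private lemma tci_hm (ci cj ck : ℝ) (h1 : -1 < ci) (h2 : ci ≤ 1) (h3 : -1 < cj) (h4 : cj ≤ 1)
    (h5 : -1 < ck) (h6 : ck ≤ 1) : 0 < 1 + ci * cj * ck := by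
  have t1 : 0 < 1 + cj * ck := by
    nlinarith [mul_pos (by linarith : (0:ℝ) < 1 + cj) (by linarith : (0:ℝ) < 1 + ck),
      mul_nonneg (by linarith : (0:ℝ) ≤ 1 - cj) (by linarith : (0:ℝ) ≤ 1 - ck)]
  have t2 : 0 ≤ 1 - cj * ck := by
    nlinarith [mul_nonneg (by linarith : (0:ℝ) ≤ 1 - cj) (by linarith : (0:ℝ) ≤ 1 + ck),
      mul_nonneg (by linarith : (0:ℝ) ≤ 1 + cj) (by linarith : (0:ℝ) ≤ 1 - ck)]
  nlinarith [mul_pos (by linarith : (0:ℝ) < 1 + ci) t1,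
    mul_nonneg (by linarith : (0:ℝ) ≤ 1 - ci) t2]

private lemma tci_posA (a b c A B C ci cj ck : ℝ)
    (ha : 0 < a) (hb : 0 < b) (hc : 0 < c)
    (hApos : 0 < A) (hBpos : 0 < B) (hCpos : 0 < C)
    (hA2 : A ^ 2 = a ^ 2 + 1) (hB2 : B ^ 2 = b ^ 2 + 1) (hC2 : C ^ 2 = c ^ 2 + 1)
    (hci2 : -1 < ci) (hci1 : ci ≤ 1) (hcj2 : -1 < cj) (hcj1 : cj ≤ 1)
    (hck2 : -1 < ck) (hck1 : ck ≤ 1)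
    (hdi : 0 ≤ ci + cj * ck) (hdj : 0 ≤ cj + ci * ck) (hdk : 0 ≤ ck + ci * cj) :
    0 < 1 + 2 * ((B * C + ci * b * c) * (C * A + cj * c * a) * (A * B + ck * a * b))
      - (B * C + ci * b * c) ^ 2 - (C * A + cj * c * a) ^ 2 - (A * B + ck * a * b) ^ 2 := by
  rw [tci_id1 a b c A B C ci cj ck hA2 hB2 hC2]
  have t1 : 0 ≤ (1 - ci ^ 2) * (b ^ 2 * c ^ 2) :=
    mul_nonneg (by nlinarith) (by positivity)
  have t2 : 0 ≤ (1 - cj ^ 2) * (a ^ 2 * c ^ 2) :=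
    mul_nonneg (by nlinarith) (by positivity)
  have t3 : 0 ≤ (1 - ck ^ 2) * (a ^ 2 * b ^ 2) :=
    mul_nonneg (by nlinarith) (by positivity)
  have t4 : 0 < 2 * (1 + ci * cj * ck) * (a ^ 2 * b ^ 2 * c ^ 2) :=
    mul_pos (by linarith [tci_hm ci cj ck hci2 hci1 hcj2 hcj1 hck2 hck1]) (by positivity)
  have t5 : 0 ≤ 2 * (ci + cj * ck) * (a ^ 2 * b * c * (B * C)) :=
    mul_nonneg (by linarith) (by positivity)
  have t6 : 0 ≤ 2 * (cj + ci * ck) * (a * b ^ 2 * c * (A * C)) :=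
    mul_nonneg (by linarith) (by positivity)
  have t7 : 0 ≤ 2 * (ck + ci * cj) * (a * b * c ^ 2 * (A * B)) :=
    mul_nonneg (by linarith) (by positivity)
  have s1 := add_pos_of_nonneg_of_pos (add_nonneg (add_nonneg t1 t2) t3) t4
  have s2 := add_pos_of_pos_of_nonneg s1 t5
  have s3 := add_pos_of_pos_of_nonneg s2 t6
  exact add_pos_of_pos_of_nonneg s3 t7

private lemma tci_posB (a b c A B C ci cj ck : ℝ)
    (hb : 0 < b) (hc : 0 < c)
    (hA2 : A ^ 2 = a ^ 2 + 1) (hB2 : B ^ 2 = b ^ 2 + 1) (hC2 : C ^ 2 = c ^ 2 + 1)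
    (hsj : 0 < 1 - cj ^ 2)
    (hdet : 0 < 1 - ci ^ 2 - cj ^ 2 - ck ^ 2 - 2 * (ci * cj * ck)) :
    0 < 1 + 2 * ((B * C + ci * b * c) * (C * A + cj * c * a) * (A * B + ck * a * b))
      - (B * C + ci * b * c) ^ 2 - (C * A + cj * c * a) ^ 2 - (A * B + ck * a * b) ^ 2 := by
  refine (mul_pos_iff_of_pos_left hsj).mp ?_
  rw [tci_id2 a b c A B C ci cj ck hA2 hB2 hC2]
  have hq1 : 0 ≤ ((1 - cj ^ 2) * (c * a * B) + (ci + cj * ck) * (a * b * C)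
      + (ck + ci * cj) * (b * c * A)) ^ 2 := sq_nonneg _
  have hq2 : 0 ≤ (1 - ci ^ 2 - cj ^ 2 - ck ^ 2 - 2 * (ci * cj * ck))
      * (a * b * C + cj * (b * c * A)) ^ 2 := mul_nonneg hdet.le (sq_nonneg _)
  have hq3 : 0 < (1 - cj ^ 2) * (1 - ci ^ 2 - cj ^ 2 - ck ^ 2 - 2 * (ci * cj * ck))
      * (b * c) ^ 2 := mul_pos (mul_pos hsj hdet) (by positivity)
  exact add_pos_of_nonneg_of_pos (add_nonneg hq1 hq2) hq3

private lemma tci_tri (x y z : ℝ) (hx : 0 < x) (hy : 0 < y) (hz : 0 < z)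
    (h : 0 < 1 + 2 * (Real.cosh x * Real.cosh y * Real.cosh z)
      - Real.cosh x ^ 2 - Real.cosh y ^ 2 - Real.cosh z ^ 2) : x < y + z := by
  have hsy : 0 < Real.sinh y := Real.sinh_pos_iff.mpr hy
  have hsz : 0 < Real.sinh z := Real.sinh_pos_iff.mpr hz
  have ey : Real.sinh y ^ 2 = Real.cosh y ^ 2 - 1 := by
    have := Real.cosh_sq y; linarith
  have ez : Real.sinh z ^ 2 = Real.cosh z ^ 2 - 1 := by
    have := Real.cosh_sq z; linarith
  have h2 : Real.cosh x < Real.cosh (y + z) := by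
    rw [Real.cosh_add]
    nlinarith [mul_pos hsy hsz, sq_nonneg (Real.cosh x - Real.cosh y * Real.cosh z - Real.sinh y * Real.sinh z)]
  have h3 : |x| < |y + z| := Real.cosh_lt_cosh.mp h2
  calc x ≤ |x| := le_abs_self x
    _ < |y + z| := h3
    _ = y + z := abs_of_pos (by linarith)

private lemma tci_dnonneg {x y z : ℝ} (hx : 0 ≤ x) (hy : 0 ≤ y) (hz : 0 ≤ z)
    (hs : x + y + z ≤ π) : 0 ≤ Real.cos x + Real.cos y * Real.cos z := by
  have h1 : Real.cos (π - x) ≤ Real.cos (y + z) :=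
    Real.cos_le_cos_of_nonneg_of_le_pi (by linarith) (by linarith) (by linarith)
  rw [Real.cos_pi_sub] at h1
  have h2 : Real.cos (y + z) ≤ Real.cos y * Real.cos z := by
    rw [Real.cos_add]
    have := mul_nonneg (Real.sin_nonneg_of_nonneg_of_le_pi hy (by linarith))
      (Real.sin_nonneg_of_nonneg_of_le_pi hz (by linarith))
    linarith
  linarith

set_option maxHeartbeats 1000000 in
theorem three_circle_triangle_inequalities
    (Θi Θj Θk : ℝ)
    (hi : Θi ∈ Set.Ico 0 π) (hj : Θj ∈ Set.Ico 0 π) (hk : Θk ∈ Set.Ico 0 π)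
    (hcond : (Θi + Θj + Θk ≤ π) ∨
      (Θi + Θj < π + Θk ∧ Θj + Θk < π + Θi ∧ Θk + Θi < π + Θj))
    (ri rj rk : ℝ) (hri : 0 < ri) (hrj : 0 < rj) (hrk : 0 < rk)
    (li lj lk : ℝ) (hli : 0 < li) (hlj : 0 < lj) (hlk : 0 < lk)
    (hcoshi : Real.cosh li = Real.cosh rj * Real.cosh rk + Real.cos Θi * Real.sinh rj * Real.sinh rk)
    (hcoshj : Real.cosh lj = Real.cosh rk * Real.cosh ri + Real.cos Θj * Real.sinh rk * Real.sinh ri)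
    (hcoshk : Real.cosh lk = Real.cosh ri * Real.cosh rj + Real.cos Θk * Real.sinh ri * Real.sinh rj) :
    li < lj + lk ∧ lj < lk + li ∧ lk < li + lj := by
  obtain ⟨hi0, hi1⟩ := hi
  obtain ⟨hj0, hj1⟩ := hj
  obtain ⟨hk0, hk1⟩ := hk
  set a := Real.sinh ri with ha_def
  set b := Real.sinh rj with hb_def
  set c := Real.sinh rk with hc_def
  set A := Real.cosh ri with hA_def
  set B := Real.cosh rj with hB_def
  set C := Real.cosh rk with hC_def
  set ci := Real.cos Θi with hci_def
  set cj := Real.cos Θj with hcj_def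
  set ck := Real.cos Θk with hck_def
  have ha : 0 < a := Real.sinh_pos_iff.mpr hri
  have hb : 0 < b := Real.sinh_pos_iff.mpr hrj
  have hc : 0 < c := Real.sinh_pos_iff.mpr hrk
  have hApos : 0 < A := Real.cosh_pos ri
  have hBpos : 0 < B := Real.cosh_pos rj
  have hCpos : 0 < C := Real.cosh_pos rk
  have hA2 : A ^ 2 = a ^ 2 + 1 := Real.cosh_sq ri
  have hB2 : B ^ 2 = b ^ 2 + 1 := Real.cosh_sq rj
  have hC2 : C ^ 2 = c ^ 2 + 1 := Real.cosh_sq rk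
  have hci1 : ci ≤ 1 := Real.cos_le_one Θi
  have hcj1 : cj ≤ 1 := Real.cos_le_one Θj
  have hck1 : ck ≤ 1 := Real.cos_le_one Θk
  have hci2 : -1 < ci := by
    have := Real.cos_lt_cos_of_nonneg_of_le_pi hi0 le_rfl hi1
    simpa [Real.cos_pi] using this
  have hcj2 : -1 < cj := by
    have := Real.cos_lt_cos_of_nonneg_of_le_pi hj0 le_rfl hj1
    simpa [Real.cos_pi] using this
  have hck2 : -1 < ck := by
    have := Real.cos_lt_cos_of_nonneg_of_le_pi hk0 le_rfl hk1
    simpa [Real.cos_pi] using this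
  -- the main quantity
  have hP : 0 < 1 + 2 * (Real.cosh li * Real.cosh lj * Real.cosh lk)
      - Real.cosh li ^ 2 - Real.cosh lj ^ 2 - Real.cosh lk ^ 2 := by
    rw [hcoshi, hcoshj, hcoshk]
    rcases le_or_gt (Θi + Θj + Θk) π with hsum | hsum
    · -- angle sum at most π : all mixed coefficients are nonnegative
      have hdi : 0 ≤ ci + cj * ck := tci_dnonneg hi0 hj0 hk0 (by linarith)
      have hdj : 0 ≤ cj + ci * ck := by
        have := tci_dnonneg hj0 hi0 hk0 (by linarith)
        linarith [this]
      have hdk : 0 ≤ ck + ci * cj := by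
        have := tci_dnonneg hk0 hi0 hj0 (by linarith)
        linarith [this]
      exact tci_posA a b c A B C ci cj ck ha hb hc hApos hBpos hCpos hA2 hB2 hC2
        hci2 hci1 hcj2 hcj1 hck2 hck1 hdi hdj hdk
    · -- angle sum exceeds π : the second condition must hold
      have hbnd := hcond.resolve_left (by linarith)
      obtain ⟨hb1, hb2, hb3⟩ := hbnd
      have hj0' : 0 < Θj := by linarith
      have hcj3 : cj < 1 := by
        have := Real.cos_lt_cos_of_nonneg_of_le_pi le_rfl hj1.le hj0'
        simpa [Real.cos_zero] using this
      have hsj : 0 < 1 - cj ^ 2 := by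
        have e : 1 - cj ^ 2 = (1 - cj) * (1 + cj) := by ring
        rw [e]
        exact mul_pos (by linarith) (by linarith)
      have ineq2 : 0 < ci + Real.cos (Θj - Θk) := by
        have habs : Real.cos (π - Θi) < Real.cos |Θj - Θk| := by
          apply Real.cos_lt_cos_of_nonneg_of_le_pi (abs_nonneg _) (by linarith)
          rw [abs_lt]
          exact ⟨by linarith, by linarith⟩
        rw [Real.cos_pi_sub, Real.cos_abs] at habs
        linarith
      have ineq1 : ci + Real.cos (Θj + Θk) < 0 := by
        rcases le_or_gt (Θj + Θk) π with hle | hgt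
        · have h1 : Real.cos (Θj + Θk) < Real.cos (π - Θi) :=
            Real.cos_lt_cos_of_nonneg_of_le_pi (by linarith) hle (by linarith)
          rw [Real.cos_pi_sub] at h1
          linarith
        · have h0 : Real.cos (Θj + Θk) = Real.cos (2 * π - (Θj + Θk)) := by
            rw [Real.cos_two_pi_sub]
          have h1 : Real.cos (2 * π - (Θj + Θk)) < Real.cos (π - Θi) :=
            Real.cos_lt_cos_of_nonneg_of_le_pi (by linarith) (by linarith) (by linarith)
          rw [Real.cos_pi_sub] at h1
          rw [h0]
          linarith
      have hdet : 0 < 1 - ci ^ 2 - cj ^ 2 - ck ^ 2 - 2 * (ci * cj * ck) := by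
        have e : 1 - ci ^ 2 - cj ^ 2 - ck ^ 2 - 2 * (ci * cj * ck)
            = -((ci + Real.cos (Θj + Θk)) * (ci + Real.cos (Θj - Θk))) := by
          rw [Real.cos_add, Real.cos_sub]
          linear_combination (-(Real.sin Θj ^ 2)) * Real.sin_sq_add_cos_sq Θk
            + (-(1 - ck ^ 2)) * Real.sin_sq_add_cos_sq Θj
        rw [e]
        have := mul_neg_of_neg_of_pos ineq1 ineq2
        linarith
      exact tci_posB a b c A B C ci cj ck hb hc hA2 hB2 hC2 hsj hdet
  refine ⟨tci_tri li lj lk hli hlj hlk (by linarith [hP]),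
    tci_tri lj lk li hlj hlk hli (by nlinarith [hP]),
    tci_tri lk li lj hlk hli hlj (by nlinarith [hP])⟩
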